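/- Let A be an integral domain, ⋆ a star operation on A, and a a nonzero element of A. Assume that every collection in (Σ')^⋆_a is finite. Then for every proper ⋆-finite ⋆-ideal 𝔞 of A containing a, there exists a proper ⋆-finite ⋆-ideal 𝔟 of A containing 𝔞 that satisfies property (⋆-c.a.). -/
import Mathlib


open scoped nonZeroDivisors

/-- A star operation on an integral domain `A` with quotient field `K`: a map on
(nonzero) fractional ideals satisfying `A^⋆ = A`, `(xI)^⋆ = x·I^⋆`, `I ⊆ I^⋆`,
monotonicity and idempotency. -/
structure StarOperation (A : Type*) [CommRing A] [IsDomain A]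
    (K : Type*) [Field K] [Algebra A K] [IsFractionRing A K] where
  star : FractionalIdeal A⁰ K → FractionalIdeal A⁰ K
  star_one : star 1 = 1
  star_smul : ∀ (x : K), x ≠ 0 → ∀ I : FractionalIdeal A⁰ K, I ≠ 0 →
    star (FractionalIdeal.spanSingleton A⁰ x * I) = FractionalIdeal.spanSingleton A⁰ x * star I
  le_star : ∀ I : FractionalIdeal A⁰ K, I ≠ 0 → I ≤ star I
  mono : ∀ I J : FractionalIdeal A⁰ K, I ≠ 0 → I ≤ J → star I ≤ star J
  star_idem : ∀ I : FractionalIdeal A⁰ K, I ≠ 0 → star (star I) = star I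

variable {A : Type*} [CommRing A] [IsDomain A]
  {K : Type*} [Field K] [Algebra A K] [IsFractionRing A K]

/-- `⋆` is of finite type: `I^⋆` is the union of the `J^⋆` over the finitely
generated (nonzero) fractional ideals `J ⊆ I`. -/
def StarOperation.IsFiniteType (s : StarOperation A K) : Prop :=
  ∀ I : FractionalIdeal A⁰ K, I ≠ 0 → ∀ x : K, x ∈ s.star I →
    ∃ J : FractionalIdeal A⁰ K, J ≠ 0 ∧ J ≤ I ∧ (J : Submodule A K).FG ∧ x ∈ s.star J

/-- A (nonzero, integral) ideal `I` is a `⋆`-ideal if `I^⋆ = I`. -/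
def IsStarIdeal (s : StarOperation A K) (I : Ideal A) : Prop :=
  I ≠ 0 ∧ s.star ↑I = (I : FractionalIdeal A⁰ K)

/-- A (nonzero, integral) ideal `I` is `⋆`-finite if `J^⋆ = I^⋆` for some finitely
generated (nonzero) ideal `J`. -/
def IsStarFinite (s : StarOperation A K) (I : Ideal A) : Prop :=
  I ≠ 0 ∧ ∃ J : Ideal A, J ≠ 0 ∧ J.FG ∧ s.star ↑J = s.star (I : FractionalIdeal A⁰ K)

/-- An ideal of `A` is `⋆`-maximal if it is maximal among proper `⋆`-ideals. -/
def IsStarMaximal (s : StarOperation A K) (M : Ideal A) : Prop :=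
  M ≠ ⊤ ∧ IsStarIdeal s M ∧ ∀ J : Ideal A, J ≠ ⊤ → IsStarIdeal s J → M ≤ J → J = M

/-- Property (⋆-c.a.): for every pair of proper ⋆-finite ⋆-ideals `𝔞₁, 𝔞₂` containing
`𝔞`, the ideal `(𝔞₁ + 𝔞₂)^⋆` is proper. -/
def StarCA (s : StarOperation A K) (𝔞 : Ideal A) : Prop :=
  ∀ 𝔞₁ 𝔞₂ : Ideal A, 𝔞 ≤ 𝔞₁ → 𝔞 ≤ 𝔞₂ →
    𝔞₁ ≠ ⊤ → IsStarIdeal s 𝔞₁ → IsStarFinite s 𝔞₁ →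
    𝔞₂ ≠ ⊤ → IsStarIdeal s 𝔞₂ → IsStarFinite s 𝔞₂ →
    s.star ↑(𝔞₁ + 𝔞₂) ≠ 1

/-- `ℱ` is a ⋆-comaximal collection over `a`: `a` lies in every member and
`(𝔞₁ + 𝔞₂)^⋆ = A` for all distinct members. -/
def IsStarComaximalOver (s : StarOperation A K) (a : A) (F : Set (Ideal A)) : Prop :=
  (∀ I ∈ F, a ∈ I) ∧ ∀ I ∈ F, ∀ J ∈ F, I ≠ J → s.star ↑(I + J) = 1

/-- `(Σ')^⋆_a`: the ⋆-comaximal collections over `a` of proper ⋆-finite ⋆-ideals. -/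
def SigmaP (s : StarOperation A K) (a : A) : Set (Set (Ideal A)) :=
  {F | IsStarComaximalOver s a F ∧ ∀ I ∈ F, I ≠ ⊤ ∧ IsStarIdeal s I ∧ IsStarFinite s I}

/-- `Σ^⋆_a`: members of `(Σ')^⋆_a` all of whose ideals satisfy (⋆-c.a.). -/
def SigmaCA (s : StarOperation A K) (a : A) : Set (Set (Ideal A)) :=
  {F | F ∈ SigmaP s a ∧ ∀ I ∈ F, StarCA s I}

/-- Let `A` be an integral domain, `⋆` a star operation on `A`, and `a ≠ 0`. If every
collection in `(Σ')^⋆_a` is finite, then every proper ⋆-finite ⋆-ideal of `A`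
containing `a` is contained in a proper ⋆-finite ⋆-ideal satisfying (⋆-c.a.). -/
theorem exists_ca_ideal_of_sigmaP_finite
    (s : StarOperation A K) (a : A) (ha : a ≠ 0)
    (h : ∀ F ∈ SigmaP s a, F.Finite) :
    ∀ 𝔞 : Ideal A, a ∈ 𝔞 → 𝔞 ≠ ⊤ → IsStarIdeal s 𝔞 → IsStarFinite s 𝔞 →
      ∃ 𝔟 : Ideal A, 𝔞 ≤ 𝔟 ∧ 𝔟 ≠ ⊤ ∧ IsStarIdeal s 𝔟 ∧ IsStarFinite s 𝔟 ∧ StarCA s 𝔟 := by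
  intro 𝔞 ha𝔞 hne hsi hsf
  by_contra hcon
  push_neg at hcon
  -- sandwich lemma: if `I ≤ J`, `I ≠ ⊥` and `I^⋆ = 1` then `J^⋆ = 1`.
  have sandwich : ∀ I J : Ideal A, I ≠ ⊥ → I ≤ J → s.star ↑I = 1 → s.star ↑J = 1 := by
    intro I J hI0 hIJ h1
    have hI0' : (I : FractionalIdeal A⁰ K) ≠ 0 := by
      rwa [Ne, FractionalIdeal.coeIdeal_eq_zero]
    have hJ0 : (J : FractionalIdeal A⁰ K) ≠ 0 := by
      rw [Ne, FractionalIdeal.coeIdeal_eq_zero]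
      exact fun hb => hI0 (le_bot_iff.mp (hb ▸ hIJ))
    refine le_antisymm ?_ ?_
    · have := s.mono (↑J) 1 hJ0 FractionalIdeal.coeIdeal_le_one
      rwa [s.star_one] at this
    · rw [← h1]
      exact s.mono _ _ hI0' ((FractionalIdeal.coeIdeal_le_coeIdeal K).mpr hIJ)
  -- the predicate preserved along the construction
  set Q : Ideal A → Prop := fun b => 𝔞 ≤ b ∧ b ≠ ⊤ ∧ IsStarIdeal s b ∧ IsStarFinite s b with hQdef
  have hQ𝔞 : Q 𝔞 := ⟨le_rfl, hne, hsi, hsf⟩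
  have key : ∀ b : Ideal A, Q b → ∃ c₁ c₂ : Ideal A, Q c₁ ∧ Q c₂ ∧ b ≤ c₁ ∧ b ≤ c₂ ∧
      s.star ↑(c₁ + c₂) = 1 := by
    rintro b ⟨hb1, hb2, hb3, hb4⟩
    have := hcon b hb1 hb2 hb3 hb4
    unfold StarCA at this
    push_neg at this
    obtain ⟨c₁, c₂, h1, h2, h3, h4, h5, h6, h7, h8, h9⟩ := this
    exact ⟨c₁, c₂, ⟨hb1.trans h1, h3, h4, h5⟩, ⟨hb1.trans h2, h6, h7, h8⟩, h1, h2, h9⟩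
  choose c₁ c₂ hQ1 hQ2 hle1 hle2 hstar using key
  -- the recursively defined chain
  set g : ℕ → {b : Ideal A // Q b} :=
    fun n => Nat.rec ⟨𝔞, hQ𝔞⟩ (fun _ p => ⟨c₂ p.1 p.2, hQ2 p.1 p.2⟩) n with hgdef
  set f : ℕ → Ideal A := fun n => c₁ (g n).1 (g n).2 with hfdef
  have hgsucc : ∀ n, (g (n + 1)).1 = c₂ (g n).1 (g n).2 := fun n => rfl
  have hgmono : ∀ n m, n ≤ m → (g n).1 ≤ (g m).1 := by
    intro n m hnm
    induction m, hnm using Nat.le_induction with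
    | base => exact le_rfl
    | succ m hm ih =>
      refine ih.trans ?_
      rw [hgsucc]
      exact hle2 _ _
  have hQf : ∀ n, Q (f n) := fun n => hQ1 _ _
  have haf : ∀ n, a ∈ f n := fun n => (hQf n).1 ha𝔞
  have hfne0 : ∀ n, f n ≠ ⊥ := by
    intro n hb
    exact ha (by simpa [hb] using haf n)
  -- pairwise ⋆-comaximality
  have hcomax : ∀ n m, n < m → s.star ↑(f n + f m) = 1 := by
    intro n m hnm
    have h0 : c₁ (g n).1 (g n).2 + c₂ (g n).1 (g n).2 ≠ ⊥ := by
      intro hb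
      have : a ∈ c₁ (g n).1 (g n).2 + c₂ (g n).1 (g n).2 := by
        rw [Ideal.add_eq_sup]; exact Ideal.mem_sup_left (haf n)
      exact ha (by simpa [hb] using this)
    refine sandwich _ _ h0 ?_ (hstar _ _)
    refine sup_le (le_sup_left) (le_trans ?_ le_sup_right)
    calc c₂ (g n).1 (g n).2 = (g (n + 1)).1 := (hgsucc n).symm
      _ ≤ (g m).1 := hgmono _ _ hnm
      _ ≤ f m := hle1 _ _
  have hcomax' : ∀ n m, n ≠ m → s.star ↑(f n + f m) = 1 := by
    intro n m hnm
    rcases lt_or_gt_of_ne hnm with h' | h'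
    · exact hcomax n m h'
    · rw [add_comm]; exact hcomax m n h'
  -- the members of the range are proper ⋆-ideals
  have hproper : ∀ n, (f n : FractionalIdeal A⁰ K) ≠ 1 := by
    intro n hb
    exact (hQf n).2.1 (by rw [← Ideal.one_eq_top]; exact FractionalIdeal.coeIdeal_eq_one.mp hb)
  -- injectivity of f
  have hfinj : Function.Injective f := by
    intro n m hnm
    by_contra hne'
    have h1 := hcomax' n m hne'
    rw [hnm] at h1
    have heq : f m + f m = f m := by rw [Ideal.add_eq_sup, sup_idem]
    rw [heq, (hQf m).2.2.1.2] at h1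
    exact hproper m h1
  -- the range of f is in SigmaP
  have hF : Set.range f ∈ SigmaP s a := by
    refine ⟨⟨?_, ?_⟩, ?_⟩
    · rintro I ⟨n, rfl⟩
      exact haf n
    · rintro I ⟨n, rfl⟩ J ⟨m, rfl⟩ hIJ
      exact hcomax' n m (fun hb => hIJ (by rw [hb]))
    · rintro I ⟨n, rfl⟩
      exact ⟨(hQf n).2.1, (hQf n).2.2.1, (hQf n).2.2.2⟩
  exact Set.infinite_range_of_injective hfinj (h _ hF)
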